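/- If ε ≠ 0, then every eigenvalue of the Harper matrix h(a, b, ε) has multiplicity at most 2; that is, every root of the characteristic polynomial of h(a, b, ε) has multiplicity at most 2, for all real a, b. -/

import Mathlib

open Matrix Complex

/-- The primitive `N`-th root of unity `ω = exp(2πi/N)`. -/
noncomputable def omegaN (N : ℕ) : ℂ := Complex.exp (2 * (Real.pi : ℂ) * Complex.I / (N : ℂ))

/-- The clock matrix `Z` with `Z_{jk} = ω^j` if `j = k`, `0` otherwise. -/
noncomputable def clockZ (N : ℕ) : Matrix (Fin N) (Fin N) ℂ :=
  Matrix.diagonal fun j => omegaN N ^ (j : ℕ)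

/-- The shift matrix `X` with `X_{jk} = 1` if `j = k + 1 (mod N)`, `0` otherwise. -/
def shiftX (N : ℕ) : Matrix (Fin N) (Fin N) ℂ :=
  Matrix.of fun j k => if (j : ℕ) = ((k : ℕ) + 1) % N then 1 else 0

/-- The shifted Harper matrix
`h(a,b,ε) = (a/2)·e^{ib}·X + (a/2)·e^{−ib}·Xᴴ + (ε/2)·(Z + Zᴴ)`. -/
noncomputable def harper (N : ℕ) (a b ε : ℝ) : Matrix (Fin N) (Fin N) ℂ :=
  ((a : ℂ) / 2 * Complex.exp ((b : ℂ) * Complex.I)) • shiftX N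
  + ((a : ℂ) / 2 * Complex.exp (-(b : ℂ) * Complex.I)) • (shiftX N)ᴴ
  + ((ε : ℂ) / 2) • (clockZ N + (clockZ N)ᴴ)

/-- The parity matrix `P` with `P_{jk} = 1` if `j + k ≡ 0 (mod N)`, `0` otherwise. -/
def parityP (N : ℕ) : Matrix (Fin N) (Fin N) ℂ :=
  Matrix.of fun j k => if ((j : ℕ) + (k : ℕ)) % N = 0 then 1 else 0

/-- The discrete Fourier transform matrix `Q` with `Q_{jk} = ω^{jk}/√N`. -/
noncomputable def dftQ (N : ℕ) : Matrix (Fin N) (Fin N) ℂ :=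
  Matrix.of fun j k => omegaN N ^ ((j : ℕ) * (k : ℕ)) / (Real.sqrt N : ℂ)

open Polynomial

set_option linter.unusedSectionVars false

section
variable {N : ℕ} [NeZero N] (hN : 2 ≤ N)
include hN

lemma val_one_fin : ((1 : Fin N) : ℕ) = 1 := by
  rw [Fin.val_one']
  exact Nat.mod_eq_of_lt (by omega)

lemma shift_cond_iff (j k : Fin N) : ((j : ℕ) = ((k : ℕ) + 1) % N) ↔ k = j - 1 := by
  have h1 : ((j : ℕ) = ((k : ℕ) + 1) % N) ↔ j = k + 1 := by
    rw [Fin.ext_iff, Fin.val_add, val_one_fin hN]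
  rw [h1, eq_sub_iff_add_eq, eq_comm]

lemma shiftX_mulVec (ψ : Fin N → ℂ) (j : Fin N) : (shiftX N *ᵥ ψ) j = ψ (j - 1) := by
  simp only [mulVec, dotProduct, shiftX, of_apply, shift_cond_iff hN, ite_mul, one_mul, zero_mul]
  simp

lemma shiftX_conjT_mulVec (ψ : Fin N → ℂ) (j : Fin N) : ((shiftX N)ᴴ *ᵥ ψ) j = ψ (j + 1) := by
  have hc : ∀ k : Fin N, ((k : ℕ) = ((j : ℕ) + 1) % N) ↔ k = j + 1 := by
    intro k
    rw [Fin.ext_iff, Fin.val_add, val_one_fin hN]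
  simp only [mulVec, dotProduct, conjTranspose_apply, shiftX, of_apply, hc,
    apply_ite (starRingEnd ℂ), _root_.map_one, _root_.map_zero, ite_mul, one_mul, zero_mul]
  simp

omit hN in
lemma clock_mulVec (ψ : Fin N → ℂ) (j : Fin N) :
    ((clockZ N + (clockZ N)ᴴ) *ᵥ ψ) j
      = (omegaN N ^ (j : ℕ) + starRingEnd ℂ (omegaN N ^ (j : ℕ))) * ψ j := by
  rw [clockZ, Matrix.diagonal_conjTranspose]
  simp [Matrix.add_mulVec, Matrix.mulVec_diagonal, Pi.star_def, add_mul]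

lemma harper_mulVec (a b ε : ℝ) (ψ : Fin N → ℂ) (j : Fin N) :
    (harper N a b ε *ᵥ ψ) j
      = ((a : ℂ) / 2 * Complex.exp ((b : ℂ) * Complex.I)) * ψ (j - 1)
        + ((a : ℂ) / 2 * Complex.exp (-(b : ℂ) * Complex.I)) * ψ (j + 1)
        + ((ε : ℂ) / 2) * (omegaN N ^ (j : ℕ) + starRingEnd ℂ (omegaN N ^ (j : ℕ))) * ψ j := by
  rw [harper, Matrix.add_mulVec, Matrix.add_mulVec, Matrix.smul_mulVec,
    Matrix.smul_mulVec, Matrix.smul_mulVec]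
  simp only [Pi.add_apply, Pi.smul_apply, smul_eq_mul, shiftX_mulVec hN,
    shiftX_conjT_mulVec hN, clock_mulVec]
  ring

end

lemma harper_isHermitian (N : ℕ) (a b ε : ℝ) : (harper N a b ε).IsHermitian := by
  have hc : starRingEnd ℂ ((a : ℂ) / 2 * Complex.exp ((b : ℂ) * Complex.I))
      = (a : ℂ) / 2 * Complex.exp (-(b : ℂ) * Complex.I) := by
    rw [RingHom.map_mul, ← Complex.exp_conj, RingHom.map_mul, Complex.conj_I, map_div₀,
      Complex.conj_ofReal, Complex.conj_ofReal, Complex.conj_ofNat, show (b : ℂ) * -I = -(b : ℂ) * I by ring]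
  have hc' : starRingEnd ℂ ((a : ℂ) / 2 * Complex.exp (-(b : ℂ) * Complex.I))
      = (a : ℂ) / 2 * Complex.exp ((b : ℂ) * Complex.I) := by
    rw [RingHom.map_mul, ← Complex.exp_conj, RingHom.map_mul, map_neg, Complex.conj_I, map_div₀,
      Complex.conj_ofReal, Complex.conj_ofReal, Complex.conj_ofNat, show -(b : ℂ) * -I = (b : ℂ) * I by ring]
  have hr : starRingEnd ℂ ((ε : ℂ) / 2) = (ε : ℂ) / 2 := by
    rw [map_div₀, Complex.conj_ofReal, Complex.conj_ofNat]
  unfold Matrix.IsHermitian harper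
  rw [conjTranspose_add, conjTranspose_add, conjTranspose_smul, conjTranspose_smul,
    conjTranspose_smul, conjTranspose_add, conjTranspose_conjTranspose,
    conjTranspose_conjTranspose]
  simp only [← starRingEnd_apply]
  rw [hc, hc', hr, add_comm ((clockZ N)ᴴ)]
  abel

section
variable {N : ℕ} [NeZero N]

lemma omegaN_prim' (hN : 2 ≤ N) : IsPrimitiveRoot (omegaN N) N := by
  simpa [omegaN] using Complex.isPrimitiveRoot_exp N (by omega)

lemma omegaN_star_pow (j : ℕ) :
    starRingEnd ℂ (omegaN N ^ j) = (omegaN N ^ j)⁻¹ := by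
  rw [map_pow, ← inv_pow]
  congr 1
  rw [omegaN, ← Complex.exp_conj, ← Complex.exp_neg]
  congr 1
  rw [map_div₀, RingHom.map_mul, RingHom.map_mul, Complex.conj_I, Complex.conj_ofReal, Complex.conj_ofNat,
    Complex.conj_natCast]
  ring

lemma omegaN_ne_zero : (omegaN N : ℂ) ≠ 0 := Complex.exp_ne_zero _

/-- Dichotomy: equal diagonal values force `j = k` or `N ∣ j + k`. -/
lemma diag_dichotomy (hN : 2 ≤ N) (j k : Fin N)
    (h : omegaN N ^ (j : ℕ) + starRingEnd ℂ (omegaN N ^ (j : ℕ))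
       = omegaN N ^ (k : ℕ) + starRingEnd ℂ (omegaN N ^ (k : ℕ))) :
    j = k ∨ N ∣ (j : ℕ) + (k : ℕ) := by
  have hprim := omegaN_prim' (N := N) hN
  set x := omegaN N ^ (j : ℕ) with hxdef
  set y := omegaN N ^ (k : ℕ) with hydef
  have hx : x ≠ 0 := pow_ne_zero _ omegaN_ne_zero
  have hy : y ≠ 0 := pow_ne_zero _ omegaN_ne_zero
  rw [omegaN_star_pow, omegaN_star_pow] at h
  have h0 : (x - y) * (x * y - 1) = 0 := by
    rw [← hxdef, ← hydef] at h
    field_simp at h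
    linear_combination h
  rcases mul_eq_zero.mp h0 with h1 | h1
  · left
    have hxy : x = y := sub_eq_zero.mp h1
    exact Fin.ext (hprim.pow_inj j.isLt k.isLt (by rw [← hxdef, ← hydef, hxy]))
  · right
    have hxy : omegaN N ^ ((j : ℕ) + (k : ℕ)) = 1 := by
      rw [pow_add, ← hxdef, ← hydef]
      exact sub_eq_zero.mp h1
    exact (IsPrimitiveRoot.pow_eq_one_iff_dvd hprim _).mp hxy

/-- At most two indices give the same diagonal value. -/
lemma diag_card_le_two (hN : 2 ≤ N) (ε : ℝ) (hε : ε ≠ 0) (lam : ℂ) :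
    (Finset.univ.filter fun j : Fin N =>
      lam = (ε : ℂ) / 2 * (omegaN N ^ (j : ℕ) + starRingEnd ℂ (omegaN N ^ (j : ℕ)))).card ≤ 2 := by
  set s := Finset.univ.filter fun j : Fin N =>
      lam = (ε : ℂ) / 2 * (omegaN N ^ (j : ℕ) + starRingEnd ℂ (omegaN N ^ (j : ℕ))) with hs
  have hε2 : ((ε : ℂ) / 2) ≠ 0 := by
    simp [Complex.ofReal_ne_zero, hε]
  have hmem : ∀ j ∈ s, ∀ k ∈ s, j = k ∨ N ∣ (j : ℕ) + (k : ℕ) := by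
    intro j hj k hk
    rw [hs, Finset.mem_filter] at hj hk
    exact diag_dichotomy hN j k (mul_left_cancel₀ hε2 (hj.2.symm.trans hk.2))
  rcases Finset.eq_empty_or_nonempty s with h | ⟨j0, hj0⟩
  · simp [h]
  · have hj0N : (j0 : ℕ) < N := j0.isLt
    set j1 : Fin N := ⟨(N - (j0 : ℕ)) % N, Nat.mod_lt _ (by omega)⟩ with hj1
    have hsub : s ⊆ {j0, j1} := by
      intro j hj
      rcases hmem j hj j0 hj0 with h | h
      · simp [h]
      · rcases h with ⟨q, hq⟩
        have hq1 : q = 0 ∨ q = 1 := by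
          have : (j : ℕ) < N := j.isLt
          rcases Nat.lt_or_ge q 2 with h2 | h2
          · omega
          · exfalso; nlinarith [j.isLt, j0.isLt]
        have hjval : (j : ℕ) + (j0 : ℕ) = 0 ∨ (j : ℕ) + (j0 : ℕ) = N := by
          rcases hq1 with rfl | rfl <;> omega
        have : j = j1 ∨ j = j0 := by
          rcases hjval with h3 | h3
          · right; exact Fin.ext (by omega)
          · left
            apply Fin.ext
            simp only [hj1]
            have : (j0 : ℕ) ≠ 0 := by omega
            rw [Nat.mod_eq_of_lt (by omega)]
            omega
        rcases this with rfl | rfl <;> simp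
    exact (Finset.card_le_card hsub).trans Finset.card_le_two

/-- Zero propagation for the eigen-recurrence when `a ≠ 0`. -/
lemma eigen_psi_zero (hN : 2 ≤ N) (a b ε : ℝ) (ha : a ≠ 0) (lam : ℂ) (ψ : Fin N → ℂ)
    (hψ : harper N a b ε *ᵥ ψ = lam • ψ) (h0 : ψ 0 = 0) (h1 : ψ 1 = 0) : ψ = 0 := by
  have hc' : ((a : ℂ) / 2 * Complex.exp (-(b : ℂ) * Complex.I)) ≠ 0 :=
    mul_ne_zero (by simp [Complex.ofReal_ne_zero, ha]) (Complex.exp_ne_zero _)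
  have key : ∀ m : ℕ, ∀ j : Fin N, (j : ℕ) = m → ψ j = 0 := by
    intro m
    induction m using Nat.strong_induction_on with
    | _ m ih =>
      intro j hj
      match m, hj with
      | 0, hj =>
        have : j = 0 := Fin.ext (by simpa using hj)
        rw [this]; exact h0
      | 1, hj =>
        have : j = 1 := Fin.ext (by rw [hj, val_one_fin hN])
        rw [this]; exact h1
      | (m' + 2), hj =>
        have hjN : m' + 2 < N := hj ▸ j.isLt
        set i : Fin N := ⟨m' + 1, by omega⟩ with hi
        have hip : i + 1 = j := by
          apply Fin.ext
          rw [Fin.val_add, val_one_fin hN, hj]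
          simp only [hi]
          exact Nat.mod_eq_of_lt (by omega)
        have him : ((i - 1 : Fin N) : ℕ) = m' := by
          rw [Fin.sub_def]
          show (N - ((1 : Fin N) : ℕ) + (m' + 1)) % N = m'
          rw [val_one_fin hN]
          have e : N - 1 + (m' + 1) = N + m' := by omega
          rw [e, Nat.add_mod_left]
          exact Nat.mod_eq_of_lt (by omega)
        have hrec := congrFun hψ i
        rw [harper_mulVec hN, hip] at hrec
        have hψi : ψ i = 0 := ih (m' + 1) (by omega) i rfl
        have hψim : ψ (i - 1) = 0 := ih m' (by omega) _ him
        rw [hψi, hψim] at hrec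
        simp only [Pi.smul_apply, smul_eq_mul, hψi, mul_zero, add_zero, zero_add] at hrec
        have hz : ((a : ℂ) / 2 * Complex.exp (-(b : ℂ) * Complex.I)) * ψ j = 0 := by
          linear_combination hrec
        have := mul_eq_zero.mp hz
        tauto
  funext j
  exact key (j : ℕ) j rfl

end

lemma my_charpoly_diagonal {n : Type*} [Fintype n] [DecidableEq n] (d : n → ℂ) :
    (Matrix.diagonal d).charpoly = ∏ i, (X - C (d i)) := by
  have h : charmatrix (Matrix.diagonal d) = Matrix.diagonal (fun i => (X : ℂ[X]) - C (d i)) := by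
    ext i j
    rcases eq_or_ne i j with rfl | hij
    · simp
    · simp [charmatrix_apply_ne _ _ _ hij, Matrix.diagonal_apply_ne _ hij,
        Matrix.diagonal_apply_ne d hij]
  rw [Matrix.charpoly, h, Matrix.det_diagonal]

lemma my_charpoly_conj {n : Type*} [Fintype n] [DecidableEq n] (U D V : Matrix n n ℂ)
    (h1 : U * V = 1) : (U * D * V).charpoly = D.charpoly := by
  let f : Matrix n n ℂ →+* Matrix n n ℂ[X] := (Polynomial.C : ℂ →+* ℂ[X]).mapMatrix
  have h2 : f U * f V = 1 := by rw [← _root_.map_mul f U V, h1, _root_.map_one f]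
  have hs : f U * Matrix.scalar n (X : ℂ[X]) * f V = Matrix.scalar n (X : ℂ[X]) := by
    rw [← (Matrix.scalar_commute (X : ℂ[X]) (fun r => Commute.all _ _) (f U)).eq, mul_assoc, h2,
      mul_one]
  have key : charmatrix (U * D * V) = f U * charmatrix D * f V := by
    have hD : f (U * D * V) = f U * f D * f V := by
      rw [_root_.map_mul f, _root_.map_mul f]
    show Matrix.scalar n (X : ℂ[X]) - f (U * D * V) = _
    rw [hD]
    show _ = f U * (Matrix.scalar n (X : ℂ[X]) - f D) * f V
    rw [mul_sub, sub_mul, hs]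
  rw [Matrix.charpoly, key, Matrix.det_mul, Matrix.det_mul, Matrix.charpoly]
  have h3 : (f U).det * (f V).det = 1 := by rw [← Matrix.det_mul, h2, Matrix.det_one]
  calc (f U).det * (charmatrix D).det * (f V).det
      = (charmatrix D).det * ((f U).det * (f V).det) := by ring
    _ = (charmatrix D).det := by rw [h3, mul_one]

lemma rootMult_prod {n : Type*} [Fintype n] [DecidableEq n] (μ : n → ℂ) (lam : ℂ) :
    rootMultiplicity lam (∏ i, (X - C (μ i))) =
      (Finset.univ.filter (fun i => lam = μ i)).card := by
  rw [← Polynomial.count_roots]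
  have : (∏ i, ((X : ℂ[X]) - C (μ i))) = ((Finset.univ.val.map μ).map fun a => X - C a).prod := by
    rw [Multiset.map_map, Finset.prod_eq_multiset_prod]
    rfl
  rw [this, Polynomial.roots_multiset_prod_X_sub_C, Multiset.count_map]
  rfl


/-- If `ε ≠ 0`, every root of the characteristic polynomial of the Harper matrix has
multiplicity at most `2`. -/
theorem harper_eigenvalue_multiplicity_le_two (N : ℕ) (hN : 2 ≤ N) (a b ε : ℝ)
    (hε : ε ≠ 0) (lam : ℂ) :
    Polynomial.rootMultiplicity lam (Matrix.charpoly (harper N a b ε)) ≤ 2 := by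
  haveI : NeZero N := ⟨by omega⟩
  rcases eq_or_ne a 0 with rfl | ha
  · -- diagonal case
    have hdiag : harper N 0 b ε = Matrix.diagonal
        (fun j : Fin N => (ε : ℂ) / 2 *
          (omegaN N ^ (j : ℕ) + starRingEnd ℂ (omegaN N ^ (j : ℕ)))) := by
      ext i j
      rcases eq_or_ne i j with rfl | hij
      · simp [harper, clockZ, Matrix.diagonal_conjTranspose, Pi.star_def, mul_add]
      · simp [harper, clockZ, Matrix.diagonal_conjTranspose, Matrix.diagonal_apply_ne _ hij,
          Matrix.diagonal_apply_ne _ hij, hij]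
    rw [hdiag, my_charpoly_diagonal, rootMult_prod]
    exact diag_card_le_two hN ε hε lam
  · -- generic case via the spectral theorem
    have hH : (harper N a b ε).IsHermitian := harper_isHermitian N a b ε
    set U := Matrix.IsHermitian.eigenvectorUnitary hH with hU
    have h1 : (U : Matrix (Fin N) (Fin N) ℂ) * star (U : Matrix (Fin N) (Fin N) ℂ) = 1 :=
      Matrix.mem_unitaryGroup_iff.mp U.prop
    have hcp : (harper N a b ε).charpoly
        = (Matrix.diagonal ((RCLike.ofReal : ℝ → ℂ) ∘ hH.eigenvalues)).charpoly := by
      conv_lhs => rw [hH.spectral_theorem]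
      exact my_charpoly_conj _ _ _ h1
    rw [hcp, my_charpoly_diagonal, rootMult_prod]
    set s := Finset.univ.filter
      (fun i : Fin N => lam = ((RCLike.ofReal : ℝ → ℂ) ∘ hH.eigenvalues) i) with hsdef
    -- the eigenspace
    set E := LinearMap.ker ((harper N a b ε).mulVecLin - lam • LinearMap.id) with hE
    have hmemE : ∀ ψ : Fin N → ℂ, ψ ∈ E ↔ harper N a b ε *ᵥ ψ = lam • ψ := by
      intro ψ
      rw [hE, LinearMap.mem_ker, LinearMap.sub_apply, LinearMap.smul_apply, LinearMap.id_apply,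
        Matrix.mulVecLin_apply, sub_eq_zero]
    -- finrank E ≤ 2
    have hE2 : Module.finrank ℂ E ≤ 2 := by
      let L : (Fin N → ℂ) →ₗ[ℂ] ℂ × ℂ :=
        LinearMap.prod (LinearMap.proj 0) (LinearMap.proj (1 : Fin N))
      have hinj : Function.Injective (L ∘ₗ E.subtype) := by
        rw [injective_iff_map_eq_zero]
        rintro ⟨ψ, hψE⟩ hx
        have h0 : ψ 0 = 0 ∧ ψ 1 = 0 := by
          have := Prod.ext_iff.mp hx
          simpa [L] using this
        exact Subtype.ext
          (eigen_psi_zero hN a b ε ha lam ψ ((hmemE ψ).mp hψE) h0.1 h0.2)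
      have := LinearMap.finrank_le_finrank_of_injective hinj
      simpa [Module.finrank_prod] using this
    -- the eigenvectors give linearly independent elements of E
    have hli0 : LinearIndependent ℂ (fun i : Fin N => (⇑(hH.eigenvectorBasis i) : Fin N → ℂ)) := by
      have h := (hH.eigenvectorBasis).orthonormal.linearIndependent
      exact h.map' (WithLp.linearEquiv 2 ℂ (Fin N → ℂ)).toLinearMap
        (LinearEquiv.ker _)
    have hmem_i : ∀ i : {i // i ∈ s}, (⇑(hH.eigenvectorBasis i) : Fin N → ℂ) ∈ E := by
      rintro ⟨i, hi⟩
      rw [hsdef, Finset.mem_filter] at hi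
      rw [hmemE, hH.mulVec_eigenvectorBasis]
      funext j
      rw [Pi.smul_apply, Pi.smul_apply]
      rw [hi.2]
      simp [Complex.real_smul]
    have hu : LinearIndependent ℂ (fun i : {i // i ∈ s} =>
        (⟨⇑(hH.eigenvectorBasis i), hmem_i i⟩ : E)) := by
      apply LinearIndependent.of_comp E.subtype
      exact hli0.comp Subtype.val Subtype.val_injective
    have hcard : s.card ≤ Module.finrank ℂ E := by
      rw [← Fintype.card_coe]
      exact hu.fintype_card_le_finrank
    exact hcard.trans hE2
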